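/- Let A = (Q, Σ, δ, q₀, F) be a DFA recognizing a language L. Define the DFA A′ = (Q^Q, Σ, δ′, q₀′, F′) whose states are all transformations of Q, with initial state q₀′ = id (the identity transformation), transition function δ′(f, a) = f δ_a (i.e., (δ′(f,a))(q) = δ(f(q), a) for all q ∈ Q), where δ_a(q) := δ(q, a), and final states F′ = {f ∈ Q^Q : f^m(q₀) ∈ F for some integer m ≥ 1}. Then L(A′) = root(L). In particular, if L is regular then root(L) is regular. -/
import Mathlib


/-- `root L` = words some positive power of which lies in `L`. -/
def root {A : Type} (L : Language A) : Language A :=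
  {w | ∃ m : ℕ, 1 ≤ m ∧ (List.replicate m w).flatten ∈ L}

/-- A language is regular if some DFA with finitely many states recognizes it. -/
def IsReg {A : Type} (L : Language A) : Prop :=
  ∃ (σ : Type) (_ : Fintype σ) (M : DFA A σ), M.accepts = L

/-- The state complexity of a language: the least number of states of a DFA recognizing it. -/
noncomputable def sc {A : Type} (L : Language A) : ℕ :=
  sInf {m | ∃ (σ : Type) (_ : Fintype σ) (M : DFA A σ), M.accepts = L ∧ Fintype.card σ = m}

private lemma evalFrom_aux {α σ : Type} (A : DFA α σ) (w : List α) :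
    ∀ f : σ → σ, (DFA.mk (fun (f : σ → σ) (a : α) => fun q => A.step (f q) a) (id : σ → σ)
        {f : σ → σ | ∃ m : ℕ, 1 ≤ m ∧ f^[m] A.start ∈ A.accept}).evalFrom f w
      = fun q => A.evalFrom (f q) w := by
  induction w with
  | nil => intro f; rfl
  | cons a w ih =>
    intro f
    simp only [DFA.evalFrom, List.foldl_cons] at *
    exact ih _

private lemma iter_aux {α σ : Type} (A : DFA α σ) (w : List α) (m : ℕ) (s : σ) :
    (fun q => A.evalFrom q w)^[m] s = A.evalFrom s (List.replicate m w).flatten := by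
  induction m generalizing s with
  | zero => simp [DFA.evalFrom]
  | succ n ih =>
    rw [Function.iterate_succ_apply, List.replicate_succ, List.flatten_cons,
      DFA.evalFrom_of_append]
    exact ih _

theorem theorem_1_1 {α σ : Type} [Fintype σ] (A : DFA α σ) (L : Language α)
    (hL : A.accepts = L) :
    (DFA.mk (fun (f : σ → σ) (a : α) => fun q => A.step (f q) a) (id : σ → σ)
        {f : σ → σ | ∃ m : ℕ, 1 ≤ m ∧ f^[m] A.start ∈ A.accept}).accepts = root L
    ∧ (∀ L' : Language α, IsReg L' → IsReg (root L')) := by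
  have main : ∀ (σ' : Type) (A' : DFA α σ'),
      (DFA.mk (fun (f : σ' → σ') (a : α) => fun q => A'.step (f q) a) (id : σ' → σ')
        {f : σ' → σ' | ∃ m : ℕ, 1 ≤ m ∧ f^[m] A'.start ∈ A'.accept}).accepts
        = root A'.accepts := by
    intro σ' A'
    ext w
    simp only [DFA.mem_accepts, DFA.eval]
    rw [evalFrom_aux A' w id]; simp only [id]
    constructor
    · rintro ⟨m, hm, hmem⟩
      refine ⟨m, hm, ?_⟩
      rw [DFA.mem_accepts, DFA.eval]
      rw [iter_aux A' w m A'.start] at hmem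
      exact hmem
    · rintro ⟨m, hm, hmem⟩
      refine ⟨m, hm, ?_⟩
      rw [iter_aux A' w m A'.start]
      exact hmem
  constructor
  · rw [← hL]; exact main σ A
  · rintro L' ⟨σ', _, M, hM⟩
    classical
    exact ⟨σ' → σ', inferInstance,
      DFA.mk (fun (f : σ' → σ') (a : α) => fun q => M.step (f q) a) (id : σ' → σ')
        {f : σ' → σ' | ∃ m : ℕ, 1 ≤ m ∧ f^[m] M.start ∈ M.accept},
      by rw [main σ' M, hM]⟩
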